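/- arXiv:1601.07624 — 3 statements merged into one kernel-verified Lean document; each statement's English description precedes it below -/
import Mathlib

section
/- (Non-randomness of the main lobe in delay) For every realization of the jitters ε_1, …, ε_{M−1} in [−ρ/2, ρ/2] and every delay τ with 0 ≤ τ ≤ T_p, the zero-Doppler cut of the ambiguity function of the random-PRI pulse train equals that of the stable-PRI pulse train: |Λ_yy(τ, 0)| = |Λ_xx(τ, 0)|; in particular both equal M (T_p − τ). -/
open MeasureTheory ProbabilityTheory Real Finset

/-- Rectangular pulse of width `Tp`: equals `1` on `(0, Tp]` and `0` elsewhere. -/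
noncomputable def pulse (Tp t : ℝ) : ℂ :=
  if 0 < t ∧ t ≤ Tp then 1 else 0

/-- Pulse train of `M` pulses with nominal PRI `Tr`, pulse width `Tp`, and jitters `ε`. -/
noncomputable def train (M : ℕ) (Tr Tp : ℝ) (ε : ℕ → ℝ) (t : ℝ) : ℂ :=
  ∑ m ∈ Finset.range M, pulse Tp (t - m * Tr - ε m)

/-- Ambiguity function `Λ_uu(τ, f) = ∫ u(t) u*(t-τ) e^{-j2πft} dt`. -/
noncomputable def AF (u : ℝ → ℂ) (τ f : ℝ) : ℂ :=
  ∫ t : ℝ, u t * (starRingEnd ℂ) (u (t - τ)) * Complex.exp (-(2 * Real.pi * f * t) * Complex.I)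

/-- `sinc x = sin x / x`, with `sinc 0 = 1`. -/
noncomputable def sinc (x : ℝ) : ℝ := if x = 0 then 1 else Real.sin x / x

lemma pulse_mul_conj (Tp τ a t : ℝ) (hτ0 : 0 ≤ τ) (hτ : τ ≤ Tp) :
    pulse Tp (t - a) * (starRingEnd ℂ) (pulse Tp (t - τ - a)) =
    Set.indicator (Set.Ioc (a + τ) (a + Tp)) (fun _ => (1:ℂ)) t := by
  unfold pulse
  rw [Set.indicator_apply]
  by_cases h : t ∈ Set.Ioc (a + τ) (a + Tp)
  · have h1 := h.1
    have h2 := h.2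
    rw [if_pos h, if_pos ⟨by linarith, by linarith⟩, if_pos ⟨by linarith, by linarith⟩]
    simp
  · rw [if_neg h]
    simp only [Set.mem_Ioc, not_and_or, not_lt, not_le] at h
    rcases h with h | h
    · have hc : ¬ (0 < t - τ - a ∧ t - τ - a ≤ Tp) := by
        intro hc; linarith [hc.1]
      rw [if_neg hc, map_zero, mul_zero]
    · have hc : ¬ (0 < t - a ∧ t - a ≤ Tp) := by
        intro hc; linarith [hc.2]
      rw [if_neg hc, zero_mul]

lemma AF_train_eq (M : ℕ) (Tr Tp ρ : ℝ) (hTp : 0 < Tp) (hρ : 0 < ρ)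
    (hρTr : ρ ≤ Tr - 2 * Tp) (ε : ℕ → ℝ)
    (hεbd : ∀ m, m < M → ε m ∈ Set.Icc (-(ρ / 2)) (ρ / 2))
    (τ : ℝ) (hτ0 : 0 ≤ τ) (hτ : τ ≤ Tp) :
    AF (train M Tr Tp ε) τ 0 = (M : ℂ) * ((Tp : ℂ) - τ) := by
  have hTr0 : 0 < Tr := by linarith
  have hint : ∀ t : ℝ, train M Tr Tp ε t * (starRingEnd ℂ) (train M Tr Tp ε (t - τ)) =
      ∑ m ∈ Finset.range M,
        Set.indicator (Set.Ioc (↑m * Tr + ε m + τ) (↑m * Tr + ε m + Tp)) (fun _ => (1:ℂ)) t := by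
    intro t
    unfold train
    rw [map_sum, Finset.sum_mul_sum]
    refine Finset.sum_congr rfl fun n hn => ?_
    rw [Finset.sum_eq_single n ?_ (fun h => absurd hn h)]
    · have e1 : t - ↑n * Tr - ε n = t - (↑n * Tr + ε n) := by ring
      have e2 : t - τ - ↑n * Tr - ε n = t - τ - (↑n * Tr + ε n) := by ring
      rw [e1, e2, pulse_mul_conj Tp τ _ t hτ0 hτ]
    · intro m hm hmn
      unfold pulse
      by_cases h1 : 0 < t - ↑n * Tr - ε n ∧ t - ↑n * Tr - ε n ≤ Tp
      · by_cases h2 : 0 < t - τ - ↑m * Tr - ε m ∧ t - τ - ↑m * Tr - ε m ≤ Tp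
        · exfalso
          have hεnb := hεbd n (Finset.mem_range.mp hn)
          have hεmb := hεbd m (Finset.mem_range.mp hm)
          simp only [Set.mem_Icc] at hεnb hεmb
          rcases lt_or_gt_of_ne hmn with hlt | hlt
          · have hcast : (m:ℝ) + 1 ≤ n := by exact_mod_cast hlt
            have hmul : ((m:ℝ) + 1) * Tr ≤ (n:ℝ) * Tr :=
              mul_le_mul_of_nonneg_right hcast hTr0.le
            linarith [h1.1, h2.2, hεnb.1, hεmb.2]
          · have hcast : (n:ℝ) + 1 ≤ m := by exact_mod_cast hlt
            have hmul : ((n:ℝ) + 1) * Tr ≤ (m:ℝ) * Tr :=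
              mul_le_mul_of_nonneg_right hcast hTr0.le
            linarith [h1.2, h2.1, hεnb.2, hεmb.1]
        · rw [if_neg h2, map_zero, mul_zero]
      · rw [if_neg h1, zero_mul]
  have hAF : AF (train M Tr Tp ε) τ 0 = ∫ t : ℝ, ∑ m ∈ Finset.range M,
      Set.indicator (Set.Ioc (↑m * Tr + ε m + τ) (↑m * Tr + ε m + Tp)) (fun _ => (1:ℂ)) t := by
    unfold AF
    congr 1
    funext t
    rw [← hint t]
    norm_num
  rw [hAF, MeasureTheory.integral_finset_sum]
  · have hval : ∀ m ∈ Finset.range M,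
        (∫ t : ℝ, Set.indicator (Set.Ioc (↑m * Tr + ε m + τ) (↑m * Tr + ε m + Tp))
          (fun _ => (1:ℂ)) t) = ((Tp - τ : ℝ) : ℂ) := by
      intro m _
      rw [MeasureTheory.integral_indicator_const (1:ℂ) measurableSet_Ioc]
      rw [measureReal_def, Real.volume_Ioc]
      have h1 : (↑m * Tr + ε m + Tp) - (↑m * Tr + ε m + τ) = Tp - τ := by ring
      rw [h1, ENNReal.toReal_ofReal (by linarith)]
      simp [Complex.real_smul]
    rw [Finset.sum_congr rfl hval, Finset.sum_const, Finset.card_range, nsmul_eq_mul]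
    push_cast
    ring
  · intro m _
    rw [integrable_indicator_iff measurableSet_Ioc]
    exact integrableOn_const measure_Ioc_lt_top.ne

/-- **Non-randomness of the main lobe in delay.** For every realization of the
jitters and every `0 ≤ τ ≤ Tp`, `|Λ_yy(τ,0)| = |Λ_xx(τ,0)|`, and both equal `M (Tp - τ)`. -/
theorem af_mainlobe_nonrandom
    (M : ℕ) (hM : 1 ≤ M) (Tr Tp ρ : ℝ) (hTp : 0 < Tp) (hρ : 0 < ρ)
    (hρTr : ρ ≤ Tr - 2 * Tp)
    (ε : ℕ → ℝ) (hε0 : ε 0 = 0)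
    (hεbd : ∀ m, m ≤ M - 1 → ε m ∈ Set.Icc (-(ρ / 2)) (ρ / 2))
    (τ : ℝ) (hτ0 : 0 ≤ τ) (hτ : τ ≤ Tp) :
    ‖AF (train M Tr Tp ε) τ 0‖ = ‖AF (train M Tr Tp (fun _ => 0)) τ 0‖ ∧
    ‖AF (train M Tr Tp ε) τ 0‖ = M * (Tp - τ) := by
  have hb1 : ∀ m, m < M → ε m ∈ Set.Icc (-(ρ / 2)) (ρ / 2) := by
    intro m hm
    exact hεbd m (by omega)
  have hb2 : ∀ m, m < M → (fun _ : ℕ => (0:ℝ)) m ∈ Set.Icc (-(ρ / 2)) (ρ / 2) := by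
    intro m _
    exact ⟨by linarith, by linarith⟩
  have h1 := AF_train_eq M Tr Tp ρ hTp hρ hρTr ε hb1 τ hτ0 hτ
  have h2 := AF_train_eq M Tr Tp ρ hTp hρ hρTr (fun _ => 0) hb2 τ hτ0 hτ
  rw [h1, h2]
  refine ⟨rfl, ?_⟩
  have he : ((M:ℂ) * ((Tp:ℂ) - τ)) = (((M : ℝ) * (Tp - τ) : ℝ) : ℂ) := by
    push_cast; ring
  rw [he, Complex.norm_real, Real.norm_of_nonneg]
  exact mul_nonneg (Nat.cast_nonneg M) (by linarith)
end

section
/- For ρ > T_p and every integer p with 1 ≤ |p| ≤ M−1, the standard deviation of the normalized range-ambiguity peak is strictly less than 1/√M: std[|Λ_yy(p T_r, 0)| / |Λ_yy(0, 0)|] < 1/√M, where |Λ_yy(0,0)| = M T_p. -/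
open MeasureTheory ProbabilityTheory Real Finset

lemma pulse_mul_eq (Tp A B : ℝ) :
    (fun t => pulse Tp (t - A) * (starRingEnd ℂ) (pulse Tp (t - B)))
      = Set.indicator (Set.Ioc (max A B) (min A B + Tp)) (fun _ => (1:ℂ)) := by
  have hset : Set.Ioc (max A B) (min A B + Tp) = Set.Ioc A (A + Tp) ∩ Set.Ioc B (B + Tp) := by
    rw [Set.Ioc_inter_Ioc, min_add_add_right]
  funext t
  rw [hset]
  simp only [pulse, Set.indicator_apply, Set.mem_inter_iff, Set.mem_Ioc,
    apply_ite (starRingEnd ℂ), map_one, map_zero]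
  by_cases h1 : 0 < t - A ∧ t - A ≤ Tp <;> by_cases h2 : 0 < t - B ∧ t - B ≤ Tp
  · rw [if_pos h1, if_pos h2, one_mul,
      if_pos ⟨⟨by linarith [h1.1], by linarith [h1.2]⟩, by linarith [h2.1], by linarith [h2.2]⟩]
  · rw [if_pos h1, if_neg h2, mul_zero, eq_comm, ite_eq_right_iff]
    rintro ⟨-, hb1, hb2⟩; exact absurd ⟨by linarith, by linarith⟩ h2
  · rw [if_neg h1, if_pos h2, zero_mul, eq_comm, ite_eq_right_iff]
    rintro ⟨⟨ha1, ha2⟩, -⟩; exact absurd ⟨by linarith, by linarith⟩ h1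
  · rw [if_neg h1, zero_mul, eq_comm, ite_eq_right_iff]
    rintro ⟨⟨ha1, ha2⟩, -⟩; exact absurd ⟨by linarith, by linarith⟩ h1

lemma pulse_corr_integrable (Tp A B : ℝ) :
    Integrable (fun t => pulse Tp (t - A) * (starRingEnd ℂ) (pulse Tp (t - B))) := by
  rw [pulse_mul_eq, integrable_indicator_iff measurableSet_Ioc]
  exact integrableOn_const measure_Ioc_lt_top.ne

lemma pulse_corr_integral (Tp A B : ℝ) :
    ∫ t : ℝ, pulse Tp (t - A) * (starRingEnd ℂ) (pulse Tp (t - B))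
      = ((max 0 (Tp - |A - B|) : ℝ) : ℂ) := by
  rw [pulse_mul_eq, integral_indicator_const (1:ℂ) measurableSet_Ioc, measureReal_def, Real.volume_Ioc,
    ENNReal.toReal_ofReal']
  have h1 : min A B + Tp - max A B = Tp - |A - B| := by
    have h := max_sub_min_eq_abs A B
    have h2 := abs_sub_comm A B
    linarith
  rw [h1, max_comm]
  simp

lemma af_train_eq (M : ℕ) (Tr Tp τ : ℝ) (e : ℕ → ℝ) :
    AF (train M Tr Tp e) τ 0 = ((∑ m ∈ Finset.range M, ∑ n ∈ Finset.range M,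
      max 0 (Tp - |(m * Tr + e m) - (τ + n * Tr + e n)|) : ℝ) : ℂ) := by
  have hint : ∀ t : ℝ, train M Tr Tp e t * (starRingEnd ℂ) (train M Tr Tp e (t - τ))
      = ∑ m ∈ Finset.range M, ∑ n ∈ Finset.range M,
          pulse Tp (t - (m * Tr + e m)) * (starRingEnd ℂ) (pulse Tp (t - (τ + n * Tr + e n))) := by
    intro t
    rw [train, train, map_sum, Finset.sum_mul_sum]
    refine Finset.sum_congr rfl fun m _ => Finset.sum_congr rfl fun n _ => ?_
    rw [show t - ↑m * Tr - e m = t - (↑m * Tr + e m) by ring,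
      show t - τ - ↑n * Tr - e n = t - (τ + ↑n * Tr + e n) by ring]
  rw [AF]
  simp only [Complex.ofReal_zero, mul_zero, zero_mul, neg_zero, Complex.exp_zero, mul_one]
  calc (∫ t : ℝ, train M Tr Tp e t * (starRingEnd ℂ) (train M Tr Tp e (t - τ)))
      = ∫ t : ℝ, ∑ m ∈ Finset.range M, ∑ n ∈ Finset.range M,
          pulse Tp (t - (m * Tr + e m)) * (starRingEnd ℂ) (pulse Tp (t - (τ + n * Tr + e n))) := by
        exact integral_congr_ae (Filter.Eventually.of_forall hint)
    _ = ∑ m ∈ Finset.range M, ∑ n ∈ Finset.range M, ∫ t : ℝ,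
          pulse Tp (t - (m * Tr + e m)) * (starRingEnd ℂ) (pulse Tp (t - (τ + n * Tr + e n))) := by
        rw [integral_finset_sum _ (fun m _ =>
          integrable_finset_sum _ (fun n _ => pulse_corr_integrable Tp _ _))]
        exact Finset.sum_congr rfl fun m _ =>
          integral_finset_sum _ (fun n _ => pulse_corr_integrable Tp _ _)
    _ = ∑ m ∈ Finset.range M, ∑ n ∈ Finset.range M,
          ((max 0 (Tp - |(m * Tr + e m) - (τ + n * Tr + e n)|) : ℝ) : ℂ) := by
        exact Finset.sum_congr rfl fun m _ => Finset.sum_congr rfl fun n _ =>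
          pulse_corr_integral Tp _ _
    _ = _ := by push_cast; ring

lemma collapse (M : ℕ) (p : ℤ) (Tr Tp ρ : ℝ) (hTp : 0 < Tp) (hρ : 0 < ρ)
    (hρTr : ρ ≤ Tr - 2 * Tp)
    (e : ℕ → ℝ) (he : ∀ m, m < M → |e m| < ρ / 2) :
    (∑ m ∈ Finset.range M, ∑ n ∈ Finset.range M,
        max 0 (Tp - |(m * Tr + e m) - ((p : ℝ) * Tr + n * Tr + e n)|))
      = ∑ m ∈ Finset.range M,
          (if 0 ≤ (m : ℤ) - p ∧ (m : ℤ) - p < (M : ℤ)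
            then max 0 (Tp - |e m - e (((m : ℤ) - p).toNat)|) else 0) := by
  have hTr : 0 < Tr := by linarith
  refine Finset.sum_congr rfl fun m hm => ?_
  have hmM : m < M := Finset.mem_range.1 hm
  have key : ∀ n ∈ Finset.range M,
      max 0 (Tp - |(m * Tr + e m) - ((p : ℝ) * Tr + n * Tr + e n)|)
        = if (n : ℤ) = (m : ℤ) - p then max 0 (Tp - |e m - e n|) else 0 := by
    intro n hn
    have hnM : n < M := Finset.mem_range.1 hn
    by_cases h : (n : ℤ) = (m : ℤ) - p
    · rw [if_pos h]
      have h' : (n : ℝ) = (m : ℝ) - (p : ℝ) := by exact_mod_cast congrArg (Int.cast : ℤ → ℝ) h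
      have harg : (m * Tr + e m) - ((p : ℝ) * Tr + n * Tr + e n) = e m - e n := by
        rw [h']; ring
      rw [harg]
    · rw [if_neg h]
      set k : ℤ := (m : ℤ) - p - n with hk
      have hk0 : k ≠ 0 := fun hc => h (by omega)
      have hsplit : (m * Tr + e m) - ((p : ℝ) * Tr + n * Tr + e n)
          = (k : ℝ) * Tr + (e m - e n) := by
        rw [hk]; push_cast; ring
      have h1 : (1 : ℝ) ≤ |(k : ℝ)| := by
        rw [← Int.cast_abs]; exact_mod_cast Int.one_le_abs hk0
      have h2 : |e m - e n| < ρ := by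
        have := he m hmM; have := he n hnM
        calc |e m - e n| ≤ |e m| + |e n| := abs_sub _ _
          _ < ρ := by linarith
      have h3 : |(k : ℝ) * Tr| ≤ |(k : ℝ) * Tr + (e m - e n)| + |e m - e n| := by
        calc |(k : ℝ) * Tr| = |((k : ℝ) * Tr + (e m - e n)) + -(e m - e n)| := by ring_nf
          _ ≤ |(k : ℝ) * Tr + (e m - e n)| + |-(e m - e n)| := abs_add_le _ _
          _ = |(k : ℝ) * Tr + (e m - e n)| + |e m - e n| := by rw [abs_neg]
      have h4 : Tr ≤ |(k : ℝ) * Tr| := by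
        rw [abs_mul, abs_of_pos hTr]; nlinarith
      have h5 : Tp ≤ |(m * Tr + e m) - ((p : ℝ) * Tr + n * Tr + e n)| := by
        rw [hsplit]; linarith
      exact max_eq_left (by linarith)
  rw [Finset.sum_congr rfl key]
  by_cases hc : 0 ≤ (m : ℤ) - p ∧ (m : ℤ) - p < (M : ℤ)
  · rw [if_pos hc]
    have hmem : ((m : ℤ) - p).toNat ∈ Finset.range M := Finset.mem_range.2 (by omega)
    have hcond : ∀ n : ℕ, ((n : ℤ) = (m : ℤ) - p) ↔ n = ((m : ℤ) - p).toNat := by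
      intro n; omega
    calc (∑ n ∈ Finset.range M, if (n : ℤ) = (m : ℤ) - p then max 0 (Tp - |e m - e n|) else 0)
        = ∑ n ∈ Finset.range M,
            if n = ((m : ℤ) - p).toNat then max 0 (Tp - |e m - e n|) else 0 := by
          exact Finset.sum_congr rfl fun n _ => by rw [if_congr (hcond n) rfl rfl]
      _ = max 0 (Tp - |e m - e (((m : ℤ) - p).toNat)|) := by
          rw [Finset.sum_ite_eq' (Finset.range M) (((m : ℤ) - p).toNat)
            (fun n => max 0 (Tp - |e m - e n|)), if_pos hmem]
  · rw [if_neg hc]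
    refine Finset.sum_eq_zero fun n hn => ?_
    have hnM : n < M := Finset.mem_range.1 hn
    rw [if_neg]; omega

lemma variance_sum_le {Ω : Type*} [MeasurableSpace Ω] (μ : Measure Ω) [IsProbabilityMeasure μ]
    (s : Finset ℕ) (Tp : ℝ) (hTp : 0 ≤ Tp) (W : ℕ → Ω → ℝ) (B : ℕ → ℕ → ℝ)
    (hmeas : ∀ m, Measurable (W m)) (hb : ∀ m ω, W m ω ∈ Set.Icc 0 Tp)
    (hB : ∀ m ∈ s, ∀ n ∈ s, IndepFun (W m) (W n) μ ∨ Tp ^ 2 / 4 ≤ B m n)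
    (hB0 : ∀ m n, 0 ≤ B m n) :
    variance (fun ω => ∑ m ∈ s, W m ω) μ ≤ ∑ m ∈ s, ∑ n ∈ s, B m n := by
  have hWint : ∀ m, Integrable (W m) μ := by
    intro m
    refine (integrable_const Tp).mono' (hmeas m).aestronglyMeasurable ?_
    exact Filter.Eventually.of_forall fun ω => by
      rw [Real.norm_eq_abs, abs_of_nonneg (hb m ω).1]; exact (hb m ω).2
  obtain ⟨c, hc⟩ : ∃ c : ℕ → ℝ, c = fun m => ∫ ω, W m ω ∂μ := ⟨_, rfl⟩
  have hc0 : ∀ m, 0 ≤ c m := fun m => hc ▸ integral_nonneg fun ω => (hb m ω).1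
  have hcT : ∀ m, c m ≤ Tp := by
    intro m
    rw [hc]
    calc (∫ ω, W m ω ∂μ) ≤ ∫ _, Tp ∂μ
        := integral_mono (hWint m) (integrable_const Tp) fun ω => (hb m ω).2
      _ = Tp := by simp
  obtain ⟨Z, hZ⟩ : ∃ Z : ℕ → Ω → ℝ, Z = fun m ω => W m ω - c m := ⟨_, rfl⟩
  have hZmeas : ∀ m, Measurable (Z m) := fun m => hZ ▸ (hmeas m).sub measurable_const
  have hZb : ∀ m ω, |Z m ω| ≤ Tp := by
    intro m ω
    rw [abs_le]
    constructor
    · have := (hb m ω).1; have := hcT m; rw [hZ]; simp only []; linarith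
    · have := (hb m ω).2; have := hc0 m; rw [hZ]; simp only []; linarith
  have hZint : ∀ m, Integrable (Z m) μ := fun m => hZ ▸ (hWint m).sub (integrable_const (c m))
  have hZZint : ∀ m n, Integrable (fun ω => Z m ω * Z n ω) μ := by
    intro m n
    refine (integrable_const (Tp * Tp)).mono'
      ((hZmeas m).mul (hZmeas n)).aestronglyMeasurable ?_
    refine Filter.Eventually.of_forall fun ω => ?_
    rw [Real.norm_eq_abs, abs_mul]
    exact mul_le_mul (hZb m ω) (hZb n ω) (abs_nonneg _) hTp
  have hZ0 : ∀ m, ∫ ω, Z m ω ∂μ = 0 := by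
    intro m
    rw [hZ]
    rw [integral_sub (hWint m) (integrable_const (c m)), integral_const]
    simp [hc]
  have hWWint : ∀ m, Integrable (fun ω => W m ω * W m ω) μ := by
    intro m
    refine (integrable_const (Tp * Tp)).mono'
      ((hmeas m).mul (hmeas m)).aestronglyMeasurable ?_
    refine Filter.Eventually.of_forall fun ω => ?_
    rw [Real.norm_eq_abs, abs_mul, abs_of_nonneg (hb m ω).1]
    exact mul_le_mul (hb m ω).2 (hb m ω).2 (hb m ω).1 hTp
  have hVar : ∀ m, ∫ ω, Z m ω * Z m ω ∂μ ≤ Tp ^ 2 / 4 := by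
    intro m
    have hkey : ∀ ω, Z m ω * Z m ω = W m ω * W m ω - 2 * c m * W m ω + c m * c m := by
      intro ω; rw [hZ]; ring
    have e1 : Integrable (fun ω => W m ω * W m ω - 2 * c m * W m ω) μ :=
      (hWWint m).sub ((hWint m).const_mul (2 * c m))
    have h1 : ∫ ω, Z m ω * Z m ω ∂μ
        = (∫ ω, W m ω * W m ω ∂μ) - 2 * c m * c m + c m * c m := by
      rw [integral_congr_ae (Filter.Eventually.of_forall hkey),
        integral_add e1 (integrable_const _),
        integral_sub (hWWint m) ((hWint m).const_mul (2 * c m)), integral_const_mul,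
        integral_const]
      simp [hc]
    have h2 : ∫ ω, W m ω * W m ω ∂μ ≤ Tp * c m := by
      calc ∫ ω, W m ω * W m ω ∂μ ≤ ∫ ω, Tp * W m ω ∂μ := by
            refine integral_mono (hWWint m) ((hWint m).const_mul Tp)
              fun ω => mul_le_mul_of_nonneg_right (hb m ω).2 (hb m ω).1
        _ = Tp * c m := by rw [integral_const_mul]; simp [hc]
    rw [h1]
    nlinarith [sq_nonneg (Tp - 2 * c m), hc0 m, hcT m]
  have hZZle : ∀ m ∈ s, ∀ n ∈ s, ∫ ω, Z m ω * Z n ω ∂μ ≤ B m n := by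
    intro m hm n hn
    rcases hB m hm n hn with hind | hbound
    · have h1 : IndepFun (Z m) (Z n) μ := by
        have := hind.comp (φ := fun x : ℝ => x - c m) (ψ := fun x : ℝ => x - c n)
          (measurable_id.sub measurable_const) (measurable_id.sub measurable_const)
        rw [hZ]; exact this
      have h2 := IndepFun.integral_mul_eq_mul_integral h1 (hZint m).aestronglyMeasurable (hZint n).aestronglyMeasurable
      calc ∫ ω, Z m ω * Z n ω ∂μ = ∫ ω, (Z m * Z n) ω ∂μ := rfl
        _ = (∫ ω, Z m ω ∂μ) * ∫ ω, Z n ω ∂μ := h2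
        _ = 0 := by rw [hZ0 m, hZ0 n, mul_zero]
        _ ≤ B m n := hB0 m n
    · calc ∫ ω, Z m ω * Z n ω ∂μ
          ≤ ∫ ω, (Z m ω * Z m ω + Z n ω * Z n ω) / 2 ∂μ := by
            refine integral_mono (hZZint m n) (((hZZint m m).add (hZZint n n)).div_const 2)
              fun ω => by
                linarith [mul_self_nonneg (Z m ω - Z n ω),
                  (by ring : (Z m ω - Z n ω) * (Z m ω - Z n ω)
                    = Z m ω * Z m ω - 2 * (Z m ω * Z n ω) + Z n ω * Z n ω)]
        _ = ((∫ ω, Z m ω * Z m ω ∂μ) + ∫ ω, Z n ω * Z n ω ∂μ) / 2 := by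
            rw [integral_div, integral_add (hZZint m m) (hZZint n n)]
        _ ≤ Tp ^ 2 / 4 := by have := hVar m; have := hVar n; linarith
        _ ≤ B m n := hbound
  -- now compute the variance
  obtain ⟨S, hS⟩ : ∃ S : Ω → ℝ, S = fun ω => ∑ m ∈ s, W m ω := ⟨_, rfl⟩
  have hSmeas : Measurable S := by
    rw [hS]; exact Finset.measurable_sum s fun m _ => hmeas m
  have hSml : MemLp S 2 μ := by
    refine memLp_of_bounded (a := 0) (b := s.card * Tp)
      (Filter.Eventually.of_forall fun ω => ?_) hSmeas.aestronglyMeasurable 2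
    rw [hS]
    constructor
    · exact Finset.sum_nonneg fun m _ => (hb m ω).1
    · calc (∑ m ∈ s, W m ω) ≤ ∑ _m ∈ s, Tp := Finset.sum_le_sum fun m _ => (hb m ω).2
        _ = s.card * Tp := by rw [Finset.sum_const, nsmul_eq_mul]
  have hmean : μ[S] = ∑ m ∈ s, c m := by
    rw [hS, hc]
    exact integral_finset_sum s fun m _ => hWint m
  have hsum : ∀ ω, (S ω - μ[S]) ^ 2 = ∑ m ∈ s, ∑ n ∈ s, Z m ω * Z n ω := by
    intro ω
    rw [hmean, show S ω - ∑ m ∈ s, c m = ∑ m ∈ s, Z m ω from by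
      rw [hS, hZ]; simp only []; rw [Finset.sum_sub_distrib],
      sq, Finset.sum_mul_sum]
  have hve : variance S μ = μ[((S - fun _ => μ[S]) ^ (2:ℕ) : Ω → ℝ)] := variance_eq_integral hSml.aemeasurable
  rw [← hS]
  have hcg : ((S - fun _ => ∫ x, S x ∂μ) ^ (2:ℕ) : Ω → ℝ)
      =ᵐ[μ] (fun ω => ∑ m ∈ s, ∑ n ∈ s, Z m ω * Z n ω) :=
    Filter.Eventually.of_forall fun ω => by
      rw [Pi.pow_apply, Pi.sub_apply]; exact hsum ω
  rw [hve, integral_congr_ae hcg, integral_finset_sum s fun m _ => integrable_finset_sum s fun n _ => hZZint m n]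
  refine le_trans (le_of_eq (Finset.sum_congr rfl fun m _ =>
    integral_finset_sum s fun n _ => hZZint m n)) ?_
  exact Finset.sum_le_sum fun m hm => Finset.sum_le_sum fun n hn => hZZle m hm n hn

lemma indepFun_const_left {Ω : Type*} [MeasurableSpace Ω] {μ : Measure Ω}
    [IsProbabilityMeasure μ] (c : ℝ) (g : Ω → ℝ) :
    IndepFun (fun _ => c) g μ := by
  rw [indepFun_iff_measure_inter_preimage_eq_mul]
  intro s t _ _
  by_cases hc : c ∈ s
  · have h1 : (fun _ : Ω => c) ⁻¹' s = Set.univ := by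
      ext ω; simp [hc]
    rw [h1]; simp
  · have h1 : (fun _ : Ω => c) ⁻¹' s = ∅ := by
      ext ω; simp [hc]
    rw [h1]; simp

lemma variance_congr' {Ω : Type*} [MeasurableSpace Ω] {μ : Measure Ω} {X Y : Ω → ℝ}
    (h : X =ᵐ[μ] Y) : variance X μ = variance Y μ := by
  have hm : μ[X] = μ[Y] := integral_congr_ae h
  simp only [variance, evariance]
  congr 1
  apply lintegral_congr_ae
  filter_upwards [h] with ω hω
  rw [hω, hm]

/-- For `ρ > Tp` and `1 ≤ |p| ≤ M-1`, the standard deviation of the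
normalized range-ambiguity peak is strictly less than `1/√M`. -/
theorem range_sidelobe_std_lt
    {Ω : Type*} [MeasurableSpace Ω] (μ : Measure Ω) [IsProbabilityMeasure μ]
    (M : ℕ) (hM : 1 ≤ M) (Tr Tp ρ : ℝ) (hTp : 0 < Tp) (hρ : 0 < ρ)
    (hρTr : ρ ≤ Tr - 2 * Tp)
    (ε : ℕ → Ω → ℝ) (hε0 : ∀ ω, ε 0 ω = 0)
    (hmeas : ∀ m, Measurable (ε m))
    (hdist : ∀ m, 1 ≤ m → m ≤ M - 1 →
      Measure.map (ε m) μ = (ENNReal.ofReal ρ)⁻¹ • volume.restrict (Set.Ioo (-(ρ / 2)) (ρ / 2)))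
    (hindep : iIndepFun (fun m : Fin M => ε (m : ℕ)) μ)
    (hTpρ : Tp < ρ)
    (p : ℤ) (hp1 : 1 ≤ |p|) (hp2 : |p| ≤ (M : ℤ) - 1) :
    Real.sqrt (variance (fun ω => ‖AF (train M Tr Tp (fun k => ε k ω)) ((p : ℝ) * Tr) 0‖ / ((M : ℝ) * Tp)) μ)
      < 1 / Real.sqrt M := by
  classical
  have hM0 : (0:ℝ) < (M:ℝ) := by exact_mod_cast hM
  obtain ⟨W, hW⟩ : ∃ W : ℕ → Ω → ℝ, W = fun (m : ℕ) (ω : Ω) =>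
      if 0 ≤ (m:ℤ) - p ∧ (m:ℤ) - p < (M:ℤ)
        then max 0 (Tp - |ε m ω - ε (((m:ℤ) - p).toNat) ω|) else 0 := ⟨_, rfl⟩
  -- almost sure boundedness of the jitters
  have hae : ∀ᵐ ω ∂μ, ∀ m ∈ Finset.range M, |ε m ω| < ρ / 2 := by
    rw [Filter.eventually_all_finset]
    intro m hm
    rcases Nat.eq_zero_or_pos m with h0 | h1
    · subst h0
      refine Filter.Eventually.of_forall fun ω => ?_
      rw [hε0 ω, abs_zero]; linarith
    · have hmle : m ≤ M - 1 := by have := Finset.mem_range.1 hm; omega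
      have hset : MeasurableSet {x : ℝ | ¬ |x| < ρ / 2} :=
        (measurableSet_lt (measurable_abs) measurable_const).compl
      rw [ae_iff]
      have heq : {ω | ¬ |ε m ω| < ρ / 2} = (ε m) ⁻¹' {x | ¬ |x| < ρ / 2} := rfl
      rw [heq, ← Measure.map_apply (hmeas m) hset, hdist m h1 hmle,
        Measure.smul_apply, Measure.restrict_apply hset]
      have hempty : {x : ℝ | ¬ |x| < ρ / 2} ∩ Set.Ioo (-(ρ / 2)) (ρ / 2) = ∅ := by
        ext x
        simp only [Set.mem_inter_iff, Set.mem_setOf_eq, Set.mem_Ioo,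
          Set.mem_empty_iff_false, iff_false, not_and]
        intro hx h1' h2'; exact hx (abs_lt.2 ⟨h1', h2'⟩)
      rw [hempty]; simp
  -- a.e. identification of the normalized peak
  have haeq : (fun ω => ‖AF (train M Tr Tp (fun k => ε k ω)) ((p:ℝ) * Tr) 0‖ / ((M:ℝ) * Tp))
      =ᵐ[μ] fun ω => ((M:ℝ) * Tp)⁻¹ * ∑ m ∈ Finset.range M, W m ω := by
    filter_upwards [hae] with ω hω
    have he : ∀ m, m < M → |(fun k => ε k ω) m| < ρ / 2 :=
      fun m hm => hω m (Finset.mem_range.2 hm)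
    rw [af_train_eq M Tr Tp ((p:ℝ) * Tr) (fun k => ε k ω),
      collapse M p Tr Tp ρ hTp hρ hρTr _ he]
    have hnn : 0 ≤ ∑ m ∈ Finset.range M,
        (if 0 ≤ (m:ℤ) - p ∧ (m:ℤ) - p < (M:ℤ)
          then max 0 (Tp - |ε m ω - ε (((m:ℤ) - p).toNat) ω|) else 0) :=
      Finset.sum_nonneg fun m _ => by split_ifs; exacts [le_max_left 0 _, le_refl 0]
    rw [Complex.norm_real, Real.norm_eq_abs, abs_of_nonneg hnn, hW, div_eq_inv_mul]
  rw [variance_congr' haeq, variance_const_mul]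
  -- properties of W
  have hWmeas : ∀ m, Measurable (W m) := by
    intro m; rw [hW]
    by_cases h : 0 ≤ (m:ℤ) - p ∧ (m:ℤ) - p < (M:ℤ)
    · simp only [if_pos h]
      exact measurable_const.max
        (measurable_const.sub ((hmeas m).sub (hmeas _)).abs)
    · simp only [if_neg h]; exact measurable_const
  have hWb : ∀ m ω, W m ω ∈ Set.Icc 0 Tp := by
    intro m ω; rw [hW]; dsimp only
    split_ifs with h
    · refine ⟨le_max_left _ _, max_le (le_of_lt hTp) ?_⟩
      have := abs_nonneg (ε m ω - ε (((m:ℤ) - p).toNat) ω); linarith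
    · exact ⟨le_refl 0, le_of_lt hTp⟩
  -- the bound matrix
  obtain ⟨B, hB⟩ : ∃ B : ℕ → ℕ → ℝ, B = fun (m n : ℕ) =>
      if (n = m ∨ (n:ℤ) = (m:ℤ) - p ∨ (m:ℤ) = (n:ℤ) - p) then Tp ^ 2 / 4 else 0 := ⟨_, rfl⟩
  have hB0 : ∀ m n, 0 ≤ B m n := by
    intro m n; rw [hB]; dsimp only; split_ifs
    · positivity
    · exact le_refl 0
  have hBind : ∀ m ∈ Finset.range M, ∀ n ∈ Finset.range M,
      IndepFun (W m) (W n) μ ∨ Tp ^ 2 / 4 ≤ B m n := by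
    intro m hm n hn
    by_cases hbad : (n = m ∨ (n:ℤ) = (m:ℤ) - p ∨ (m:ℤ) = (n:ℤ) - p)
    · right; rw [hB]; dsimp only; rw [if_pos hbad]
    · left
      by_cases hcm : 0 ≤ (m:ℤ) - p ∧ (m:ℤ) - p < (M:ℤ)
      · by_cases hcn : 0 ≤ (n:ℤ) - p ∧ (n:ℤ) - p < (M:ℤ)
        · -- genuine independence via disjoint index pairs
          have hmM : m < M := Finset.mem_range.1 hm
          have hnM : n < M := Finset.mem_range.1 hn
          have hqmM : ((m:ℤ) - p).toNat < M := by omega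
          have hqnM : ((n:ℤ) - p).toNat < M := by omega
          have h4 := hindep.indepFun_prodMk_prodMk (fun i => hmeas i)
            ⟨m, hmM⟩ ⟨((m:ℤ) - p).toNat, hqmM⟩ ⟨n, hnM⟩ ⟨((n:ℤ) - p).toNat, hqnM⟩
            (Fin.ne_of_val_ne (by simp only []; omega))
            (Fin.ne_of_val_ne (by simp only []; omega))
            (Fin.ne_of_val_ne (by simp only []; omega))
            (Fin.ne_of_val_ne (by simp only []; omega))
          have hφ : Measurable (fun z : ℝ × ℝ => max 0 (Tp - |z.1 - z.2|)) :=
            measurable_const.max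
              (measurable_const.sub (measurable_fst.sub measurable_snd).abs)
          have h5 := h4.comp hφ hφ
          have e1 : W m = (fun z : ℝ × ℝ => max 0 (Tp - |z.1 - z.2|))
              ∘ (fun ω => (ε m ω, ε (((m:ℤ) - p).toNat) ω)) := by
            funext ω; rw [hW]; simp only [Function.comp_apply, if_pos hcm]
          have e2 : W n = (fun z : ℝ × ℝ => max 0 (Tp - |z.1 - z.2|))
              ∘ (fun ω => (ε n ω, ε (((n:ℤ) - p).toNat) ω)) := by
            funext ω; rw [hW]; simp only [Function.comp_apply, if_pos hcn]
          rw [e1, e2]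
          exact h5
        · have e2 : W n = fun _ => (0:ℝ) := by
            funext ω; rw [hW]; simp only [if_neg hcn]
          rw [e2]
          exact (_root_.indepFun_const_left 0 (W m)).symm
      · have e1 : W m = fun _ => (0:ℝ) := by
          funext ω; rw [hW]; simp only [if_neg hcm]
        rw [e1]
        exact _root_.indepFun_const_left 0 (W n)
  have key := variance_sum_le μ (Finset.range M) Tp (le_of_lt hTp) W B hWmeas hWb hBind hB0
  -- counting
  have hcount : ∀ m, (∑ n ∈ Finset.range M, B m n) ≤ 3 * (Tp ^ 2 / 4) := by
    intro m
    have hsub : (Finset.range M).filter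
        (fun n => n = m ∨ (n:ℤ) = (m:ℤ) - p ∨ (m:ℤ) = (n:ℤ) - p)
        ⊆ {m, ((m:ℤ) - p).toNat, ((m:ℤ) + p).toNat} := by
      intro n hn
      have hn2 := (Finset.mem_filter.1 hn).2
      simp only [Finset.mem_insert, Finset.mem_singleton]
      rcases hn2 with h | h | h
      · exact Or.inl h
      · exact Or.inr (Or.inl (by omega))
      · exact Or.inr (Or.inr (by omega))
    have hcard : ((Finset.range M).filter
        (fun n => n = m ∨ (n:ℤ) = (m:ℤ) - p ∨ (m:ℤ) = (n:ℤ) - p)).card ≤ 3 := by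
      refine le_trans (Finset.card_le_card hsub) ?_
      refine le_trans (Finset.card_insert_le _ _) ?_
      refine le_trans (Nat.succ_le_succ (Finset.card_insert_le _ _)) ?_
      simp
    calc (∑ n ∈ Finset.range M, B m n)
        = ∑ n ∈ (Finset.range M).filter
            (fun n => n = m ∨ (n:ℤ) = (m:ℤ) - p ∨ (m:ℤ) = (n:ℤ) - p), Tp ^ 2 / 4 := by
          rw [Finset.sum_filter]
          exact Finset.sum_congr rfl fun n _ => by rw [hB]
      _ = ((Finset.range M).filter
            (fun n => n = m ∨ (n:ℤ) = (m:ℤ) - p ∨ (m:ℤ) = (n:ℤ) - p)).card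
            • (Tp ^ 2 / 4) := Finset.sum_const _
      _ ≤ 3 * (Tp ^ 2 / 4) := by
          rw [nsmul_eq_mul]
          exact mul_le_mul_of_nonneg_right (by exact_mod_cast hcard) (by positivity)
  have hvar : variance (fun ω => ∑ m ∈ Finset.range M, W m ω) μ ≤ (M:ℝ) * (3 * (Tp ^ 2 / 4)) := by
    refine key.trans ?_
    calc (∑ m ∈ Finset.range M, ∑ n ∈ Finset.range M, B m n)
        ≤ ∑ _m ∈ Finset.range M, 3 * (Tp ^ 2 / 4) :=
          Finset.sum_le_sum fun m _ => hcount m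
      _ = (M:ℝ) * (3 * (Tp ^ 2 / 4)) := by
          rw [Finset.sum_const, Finset.card_range, nsmul_eq_mul]
  -- final arithmetic
  have hlt : (((M:ℝ) * Tp)⁻¹) ^ 2 * variance (fun ω => ∑ m ∈ Finset.range M, W m ω) μ
      < 1 / (M:ℝ) := by
    have h1 : (((M:ℝ) * Tp)⁻¹) ^ 2 * variance (fun ω => ∑ m ∈ Finset.range M, W m ω) μ
        ≤ (((M:ℝ) * Tp)⁻¹) ^ 2 * ((M:ℝ) * (3 * (Tp ^ 2 / 4))) :=
      mul_le_mul_of_nonneg_left hvar (by positivity)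
    have h2 : (((M:ℝ) * Tp)⁻¹) ^ 2 * ((M:ℝ) * (3 * (Tp ^ 2 / 4))) = 3 / 4 * (1 / (M:ℝ)) := by
      field_simp
    have h3 : 0 < 1 / (M:ℝ) := by positivity
    calc (((M:ℝ) * Tp)⁻¹) ^ 2 * variance (fun ω => ∑ m ∈ Finset.range M, W m ω) μ
        ≤ 3 / 4 * (1 / (M:ℝ)) := h2 ▸ h1
      _ < 1 / (M:ℝ) := by linarith
  have h4 : Real.sqrt ((((M:ℝ) * Tp)⁻¹) ^ 2
      * variance (fun ω => ∑ m ∈ Finset.range M, W m ω) μ) < Real.sqrt (1 / (M:ℝ)) :=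
    Real.sqrt_lt_sqrt (mul_nonneg (sq_nonneg _) (variance_nonneg _ _)) hlt
  rw [one_div, Real.sqrt_inv] at h4
  rw [one_div]
  exact h4
end

section
/- (Expected Doppler-cut expansion) For every real f, the normalized expected zero-delay cut satisfies E[|Λ_yy(0, f)|]/|Λ_yy(0, 0)| = (|sinc(π f T_p)|/M) · E[ ( M + 2 ∑_{p=1}^{M−1} ∑_{n=0}^{M−p−1} cos(2π f (p T_r − ε_{n+p} + ε_n)) )^{1/2} ], where |Λ_yy(0,0)| = M T_p and sinc(x) = sin(x)/x with sinc(0) = 1. -/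
open MeasureTheory ProbabilityTheory Real Finset

lemma interval_exp (f Tp a : ℝ) :
    (∫ t in a..(a + Tp), Complex.exp (-(2 * Real.pi * f * t) * Complex.I))
      = Complex.exp (-(2 * Real.pi * f * a) * Complex.I) *
        (Tp * _root_.sinc (Real.pi * f * Tp) * Complex.exp (-(Real.pi * f * Tp) * Complex.I)) := by
  by_cases hf : f = 0
  · subst hf
    simp [_root_.sinc, intervalIntegral.integral_const]
  · have hc : (-(2 * Real.pi * f) * Complex.I : ℂ) ≠ 0 := by
      simp [Real.pi_ne_zero, hf, Complex.ext_iff]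
    rw [show (fun t : ℝ => Complex.exp (-(2 * Real.pi * f * ↑t) * Complex.I))
        = fun t : ℝ => Complex.exp ((-(2 * Real.pi * f) * Complex.I) * t) from
        funext fun t => by ring_nf]
    rw [integral_exp_mul_complex hc]
    set A := Complex.exp (-(2 * Real.pi * f * a) * Complex.I) with hA
    set E := Complex.exp (-(Real.pi * f * Tp) * Complex.I) with hEdef
    set F := Complex.exp ((Real.pi * f * Tp : ℝ) * Complex.I) with hFdef
    have key : (Tp : ℂ) * (_root_.sinc (Real.pi * f * Tp) : ℂ) * ((Real.pi : ℂ) * f)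
        = Complex.sin ((Real.pi : ℂ) * f * Tp) := by
      by_cases hTp : Tp = 0
      · simp [hTp]
      · have hne : Real.pi * f * Tp ≠ 0 := by
          simp [Real.pi_ne_zero, hf, hTp]
        rw [_root_.sinc, if_neg hne]
        push_cast
        have : ((Real.pi : ℂ) * f * Tp) ≠ 0 := by exact_mod_cast hne
        have hTpc : (Tp : ℂ) ≠ 0 := by exact_mod_cast hTp
        have hfc : (f : ℂ) ≠ 0 := by exact_mod_cast hf
        field_simp
    have hsin : Complex.sin ((Real.pi : ℂ) * f * Tp) = (E - F) * Complex.I / 2 := by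
      rw [Complex.sin, hEdef, hFdef]
      push_cast
      ring_nf
    have hE : F * E = 1 := by
      rw [hEdef, hFdef, ← Complex.exp_add]
      push_cast
      ring_nf
      exact Complex.exp_zero
    have expand : Complex.exp ((-(2 * Real.pi * f) * Complex.I) * ((a : ℂ) + Tp)) = A * E ^ 2 := by
      rw [show ((-(2 * Real.pi * f) * Complex.I) * ((a : ℂ) + Tp))
          = (-(2 * Real.pi * f * a) * Complex.I) + ((-(Real.pi * f * Tp) * Complex.I)
            + (-(Real.pi * f * Tp) * Complex.I)) from by push_cast; ring,
        Complex.exp_add, Complex.exp_add, hA, hEdef]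
      ring
    have expa : Complex.exp ((-(2 * Real.pi * f) * Complex.I) * (a : ℂ)) = A := by
      rw [hA]; congr 1; push_cast; ring
    rw [div_eq_iff hc]
    push_cast
    rw [expand, expa]
    linear_combination (2 * A * E * Complex.I) * key + (2 * A * E * Complex.I) * hsin
      + A * hE + (A * E * (E - F)) * Complex.I_mul_I

lemma normsq_sum_exp (M : ℕ) (θ : ℕ → ℝ) :
    Complex.normSq (∑ m ∈ range M, Complex.exp (-(θ m : ℂ) * Complex.I))
      = ∑ m ∈ range M, ∑ n ∈ range M, Real.cos (θ n - θ m) := by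
  set z := ∑ m ∈ range M, Complex.exp (-(θ m : ℂ) * Complex.I) with hz
  have h1 : (Complex.normSq z : ℂ) = z * (starRingEnd ℂ) z := (Complex.mul_conj z).symm
  have h2 : z * (starRingEnd ℂ) z
      = ∑ m ∈ range M, ∑ n ∈ range M, Complex.exp (((θ n - θ m : ℝ) : ℂ) * Complex.I) := by
    rw [hz, map_sum, Finset.sum_mul_sum]
    refine Finset.sum_congr rfl fun m _ => Finset.sum_congr rfl fun n _ => ?_
    rw [← Complex.exp_conj, ← Complex.exp_add]
    congr 1
    simp [Complex.ext_iff]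
    ring
  have h3 : Complex.normSq z = (z * (starRingEnd ℂ) z).re := by
    rw [← h1]; simp
  rw [h3, h2, Complex.re_sum]
  refine Finset.sum_congr rfl fun m _ => ?_
  rw [Complex.re_sum]
  exact Finset.sum_congr rfl fun n _ => Complex.exp_ofReal_mul_I_re _

lemma double_cos (M : ℕ) (θ : ℕ → ℝ) :
    ∑ m ∈ range M, ∑ n ∈ range M, Real.cos (θ n - θ m)
      = M + 2 * ∑ p ∈ Finset.Ico 1 M, ∑ n ∈ range (M - p), Real.cos (θ (n + p) - θ n) := by
  induction M with
  | zero => simp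
  | succ M ih =>
    have hL : ∑ m ∈ range (M + 1), ∑ n ∈ range (M + 1), Real.cos (θ n - θ m)
        = (∑ m ∈ range M, ∑ n ∈ range M, Real.cos (θ n - θ m))
          + 1 + 2 * ∑ n ∈ range M, Real.cos (θ M - θ n) := by
      rw [Finset.sum_range_succ]
      have : ∀ m ∈ range M, ∑ n ∈ range (M + 1), Real.cos (θ n - θ m)
          = (∑ n ∈ range M, Real.cos (θ n - θ m)) + Real.cos (θ M - θ m) := by
        intro m _
        rw [Finset.sum_range_succ]
      rw [Finset.sum_congr rfl this, Finset.sum_add_distrib, Finset.sum_range_succ]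
      have hcos : ∀ n, Real.cos (θ n - θ M) = Real.cos (θ M - θ n) := by
        intro n; rw [← Real.cos_neg]; ring_nf
      simp only [hcos, sub_self, Real.cos_zero]
      ring
    rw [hL, ih]
    have hR : ∑ p ∈ Finset.Ico 1 (M + 1), ∑ n ∈ range (M + 1 - p), Real.cos (θ (n + p) - θ n)
        = (∑ p ∈ Finset.Ico 1 M, ∑ n ∈ range (M - p), Real.cos (θ (n + p) - θ n))
          + ∑ n ∈ range M, Real.cos (θ M - θ n) := by
      rcases Nat.eq_zero_or_pos M with hM0 | hM0
      · subst hM0; simp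
      rw [Finset.sum_Ico_succ_top (by omega : 1 ≤ M)]
      have hsplit : ∀ p ∈ Finset.Ico 1 M, ∑ n ∈ range (M + 1 - p), Real.cos (θ (n + p) - θ n)
          = (∑ n ∈ range (M - p), Real.cos (θ (n + p) - θ n)) + Real.cos (θ M - θ (M - p)) := by
        intro p hp
        rw [Finset.mem_Ico] at hp
        have h1 : M + 1 - p = (M - p) + 1 := by omega
        rw [h1, Finset.sum_range_succ]
        have h2 : M - p + p = M := by omega
        rw [h2]
      rw [Finset.sum_congr rfl hsplit, Finset.sum_add_distrib]
      have hlast : ∑ n ∈ range (M + 1 - M), Real.cos (θ (n + M) - θ n) = Real.cos (θ M - θ 0) := by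
        have : M + 1 - M = 1 := by omega
        rw [this]
        simp
      rw [hlast]
      have hreflect : ∑ p ∈ Finset.Ico 1 M, Real.cos (θ M - θ (M - p))
          = ∑ n ∈ Finset.Ico 1 M, Real.cos (θ M - θ n) := by
        refine Finset.sum_nbij' (fun p => M - p) (fun n => M - n) ?_ ?_ ?_ ?_ ?_ <;>
          · intro a ha
            simp only [Finset.mem_Ico] at *
            try omega
      rw [hreflect]
      have : ∑ n ∈ range M, Real.cos (θ M - θ n)
          = Real.cos (θ M - θ 0) + ∑ n ∈ Finset.Ico 1 M, Real.cos (θ M - θ n) := by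
        rw [Finset.range_eq_Ico, Finset.sum_eq_sum_Ico_succ_bot hM0]
      rw [this]
      ring
    rw [hR]
    push_cast
    ring

lemma AF_norm (M : ℕ) (Tr Tp : ℝ) (hTp : 0 < Tp) (e : ℕ → ℝ) (f : ℝ)
    (hsep : ∀ m n, m < n → n < M → (m : ℝ) * Tr + e m + Tp ≤ (n : ℝ) * Tr + e n) :
    ‖AF (train M Tr Tp e) 0 f‖ = Tp * |_root_.sinc (Real.pi * f * Tp)| *
      Real.sqrt ((M : ℝ) + 2 * ∑ p ∈ Finset.Ico 1 M, ∑ n ∈ range (M - p),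
        Real.cos (2 * Real.pi * f * ((p : ℝ) * Tr + e (n + p) - e n))) := by
  set a : ℕ → ℝ := fun m => (m : ℝ) * Tr + e m with ha
  -- Step A : pointwise integrand identity
  have stepA : ∀ t : ℝ, train M Tr Tp e t * (starRingEnd ℂ) (train M Tr Tp e (t - 0)) *
      Complex.exp (-(2 * Real.pi * f * t) * Complex.I)
      = ∑ m ∈ range M, Set.indicator (Set.Ioc (a m) (a m + Tp))
          (fun s => Complex.exp (-(2 * Real.pi * f * s) * Complex.I)) t := by
    intro t
    rw [sub_zero]
    have hpulse : ∀ m : ℕ, pulse Tp (t - m * Tr - e m)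
        = if a m < t ∧ t ≤ a m + Tp then 1 else 0 := by
      intro m
      unfold pulse
      congr 1
      simp only [ha, eq_iff_iff]
      constructor <;> (rintro ⟨h1, h2⟩; constructor <;> linarith)
    by_cases hex : ∃ m, m ∈ range M ∧ a m < t ∧ t ≤ a m + Tp
    · obtain ⟨m0, hm0, hcond⟩ := hex
      have huniq : ∀ m ∈ range M, m ≠ m0 → ¬(a m < t ∧ t ≤ a m + Tp) := by
        intro m hm hne hc
        rw [Finset.mem_range] at hm hm0
        rcases Nat.lt_or_ge m m0 with hlt | hge
        · have := hsep m m0 hlt hm0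
          have h1 : a m + Tp ≤ a m0 := this
          exact absurd hc.2 (by linarith [hcond.1])
        · have hlt : m0 < m := by omega
          have h1 : a m0 + Tp ≤ a m := hsep m0 m hlt hm
          exact absurd hcond.2 (by linarith [hc.1])
      have htrain : train M Tr Tp e t = 1 := by
        unfold train
        rw [Finset.sum_eq_single_of_mem m0 hm0 (fun m hm hne => by
          rw [hpulse m, if_neg (huniq m hm hne)]), hpulse m0, if_pos hcond]
      have hind : (∑ m ∈ range M, Set.indicator (Set.Ioc (a m) (a m + Tp))
          (fun s => Complex.exp (-(2 * Real.pi * f * s) * Complex.I)) t)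
          = Complex.exp (-(2 * Real.pi * f * t) * Complex.I) := by
        rw [Finset.sum_eq_single_of_mem m0 hm0 (fun m hm hne => by
          rw [Set.indicator_of_notMem (by simpa [Set.mem_Ioc] using huniq m hm hne)]),
          Set.indicator_of_mem (by simpa [Set.mem_Ioc] using hcond)]
      rw [htrain, hind]
      simp
    · push_neg at hex
      have htrain : train M Tr Tp e t = 0 := by
        unfold train
        refine Finset.sum_eq_zero fun m hm => ?_
        rw [hpulse m, if_neg]
        intro hc
        exact absurd hc.2 (not_le.mpr (hex m hm hc.1))
      have hind : (∑ m ∈ range M, Set.indicator (Set.Ioc (a m) (a m + Tp))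
          (fun s => Complex.exp (-(2 * Real.pi * f * s) * Complex.I)) t) = 0 := by
        refine Finset.sum_eq_zero fun m hm => ?_
        rw [Set.indicator_of_notMem]
        rw [Set.mem_Ioc]
        intro hc
        exact absurd hc.2 (not_le.mpr (hex m hm hc.1))
      rw [htrain, hind]
      simp
  -- Step B : integrate
  have stepB : AF (train M Tr Tp e) 0 f
      = ∑ m ∈ range M, Complex.exp (-(2 * Real.pi * f * (a m)) * Complex.I) *
        (Tp * _root_.sinc (Real.pi * f * Tp) * Complex.exp (-(Real.pi * f * Tp) * Complex.I)) := by
    unfold AF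
    rw [MeasureTheory.integral_congr_ae (Filter.Eventually.of_forall stepA)]
    have hcont : Continuous (fun s : ℝ => Complex.exp (-(2 * Real.pi * f * s) * Complex.I)) := by
      fun_prop
    have hint : ∀ m ∈ range M, Integrable ((Set.Ioc (a m) (a m + Tp)).indicator
        (fun s => Complex.exp (-(2 * Real.pi * f * s) * Complex.I))) := by
      intro m _
      exact (hcont.integrableOn_Ioc).integrable_indicator measurableSet_Ioc
    rw [MeasureTheory.integral_finset_sum _ hint]
    refine Finset.sum_congr rfl fun m _ => ?_
    rw [MeasureTheory.integral_indicator measurableSet_Ioc,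
      ← intervalIntegral.integral_of_le (by linarith : a m ≤ a m + Tp), interval_exp]
  rw [stepB, ← Finset.sum_mul]
  rw [norm_mul]
  have hK : ‖(Tp : ℂ) * (_root_.sinc (Real.pi * f * Tp) : ℝ) * Complex.exp (-(Real.pi * f * Tp) * Complex.I)‖
      = Tp * |_root_.sinc (Real.pi * f * Tp)| := by
    rw [norm_mul, norm_mul,
      Complex.norm_exp]
    simp [abs_of_pos hTp]
  rw [hK]
  have hsum : ‖∑ m ∈ range M, Complex.exp (-(2 * Real.pi * f * (a m)) * Complex.I)‖
      = Real.sqrt ((M : ℝ) + 2 * ∑ p ∈ Finset.Ico 1 M, ∑ n ∈ range (M - p),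
        Real.cos (2 * Real.pi * f * ((p : ℝ) * Tr + e (n + p) - e n))) := by
    have hre : ∀ m : ℕ, (-(2 * Real.pi * f * (a m)) * Complex.I : ℂ)
        = -((2 * Real.pi * f * a m : ℝ) : ℂ) * Complex.I := by
      intro m; push_cast; ring
    rw [Complex.norm_def]
    rw [show (∑ m ∈ range M, Complex.exp (-(2 * Real.pi * f * (a m)) * Complex.I))
        = ∑ m ∈ range M, Complex.exp (-((2 * Real.pi * f * a m : ℝ) : ℂ) * Complex.I) from
      Finset.sum_congr rfl fun m _ => by rw [hre]]
    rw [normsq_sum_exp M (fun m => 2 * Real.pi * f * a m), double_cos]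
    have heq : ∑ p ∈ Finset.Ico 1 M, ∑ n ∈ range (M - p),
        Real.cos ((fun m => 2 * Real.pi * f * a m) (n + p) - (fun m => 2 * Real.pi * f * a m) n)
        = ∑ p ∈ Finset.Ico 1 M, ∑ n ∈ range (M - p),
          Real.cos (2 * Real.pi * f * ((p : ℝ) * Tr + e (n + p) - e n)) := by
      refine Finset.sum_congr rfl fun p hp => Finset.sum_congr rfl fun n hn => ?_
      simp only [ha]
      congr 1
      push_cast
      ring
    rw [heq]
  rw [hsum]
  ring

/-- extend a `Fin M` vector to `ℕ` by zero -/
noncomputable def liftF (M : ℕ) (v : Fin M → ℝ) (k : ℕ) : ℝ :=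
  if h : k < M then v ⟨k, h⟩ else 0

lemma liftF_continuous (M k : ℕ) : Continuous (fun v : Fin M → ℝ => liftF M v k) := by
  unfold liftF
  by_cases h : k < M
  · simp only [dif_pos h]
    exact continuous_apply _
  · simp only [dif_neg h]
    exact continuous_const

noncomputable def Gfun (M : ℕ) (Tr f : ℝ) (v : Fin M → ℝ) : ℝ :=
  Real.sqrt ((M : ℝ) + 2 * ∑ p ∈ Finset.Ico 1 M, ∑ n ∈ Finset.range (M - p),
    Real.cos (2 * Real.pi * f * ((p : ℝ) * Tr + liftF M v (n + p) - liftF M v n)))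

lemma Gfun_continuous (M : ℕ) (Tr f : ℝ) : Continuous (Gfun M Tr f) := by
  unfold Gfun
  refine Real.continuous_sqrt.comp ?_
  refine continuous_const.add (continuous_const.mul ?_)
  refine continuous_finset_sum _ fun p _ => continuous_finset_sum _ fun n _ => ?_
  exact Real.continuous_cos.comp (continuous_const.mul
    ((continuous_const.add (liftF_continuous M (n + p))).sub (liftF_continuous M n)))

lemma map_eq_pi {Ω : Type*} [MeasurableSpace Ω] (μ : Measure Ω) [IsProbabilityMeasure μ]
    {M : ℕ} (g : Fin M → Ω → ℝ) (hg : ∀ i, Measurable (g i))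
    (h : iIndepFun g μ) :
    Measure.map (fun ω i => g i ω) μ = Measure.pi (fun i => Measure.map (g i) μ) := by
  haveI : ∀ i, IsProbabilityMeasure (Measure.map (g i) μ) :=
    fun i => Measure.isProbabilityMeasure_map (hg i).aemeasurable
  refine (Measure.pi_eq fun s hs => ?_).symm
  rw [Measure.map_apply (measurable_pi_lambda _ hg) (MeasurableSet.univ_pi hs)]
  have hpre : (fun ω i => g i ω) ⁻¹' (Set.pi Set.univ s) = ⋂ i ∈ (Finset.univ : Finset (Fin M)), g i ⁻¹' s i := by
    ext ω
    simp [Set.mem_pi]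
  rw [hpre, h.measure_inter_preimage_eq_mul Finset.univ (fun i _ => hs i)]
  refine Finset.prod_congr rfl fun i _ => ?_
  rw [Measure.map_apply (hg i) (hs i)]

/-- **Expected Doppler-cut expansion.** For every `f`,
`E[|Λ_yy(0,f)|]/(M Tp) = (|sinc(π f Tp)|/M) E[√(M + 2 ∑_{p=1}^{M-1} ∑_{n=0}^{M-p-1}
cos(2π f (p Tr - ε_{n+p} + ε_n)))]`. -/
theorem doppler_expected_expansion
    {Ω : Type*} [MeasurableSpace Ω] (μ : Measure Ω) [IsProbabilityMeasure μ]
    (M : ℕ) (hM : 1 ≤ M) (Tr Tp ρ : ℝ) (hTp : 0 < Tp) (hρ : 0 < ρ)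
    (hρTr : ρ ≤ Tr - 2 * Tp)
    (ε : ℕ → Ω → ℝ) (hε0 : ∀ ω, ε 0 ω = 0)
    (hmeas : ∀ m, Measurable (ε m))
    (hdist : ∀ m, 1 ≤ m → m ≤ M - 1 →
      Measure.map (ε m) μ = (ENNReal.ofReal ρ)⁻¹ • volume.restrict (Set.Ioo (-(ρ / 2)) (ρ / 2)))
    (hindep : iIndepFun (fun m : Fin M => ε (m : ℕ)) μ)
    (f : ℝ) :
    (∫ ω, ‖AF (train M Tr Tp (fun k => ε k ω)) 0 f‖ ∂μ) / ((M : ℝ) * Tp)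
      = |_root_.sinc (Real.pi * f * Tp)| / M *
        ∫ ω, Real.sqrt ((M : ℝ) + 2 * ∑ p ∈ Finset.Ico 1 M, ∑ n ∈ Finset.range (M - p),
          Real.cos (2 * Real.pi * f * ((p : ℝ) * Tr - ε (n + p) ω + ε n ω))) ∂μ := by
  -- a.e. all jitters lie in the interval
  have hae : ∀ᵐ ω ∂μ, ∀ m, m < M → ε m ω ∈ Set.Ioo (-(ρ / 2)) (ρ / 2) := by
    rw [MeasureTheory.ae_all_iff]
    intro m
    by_cases h0 : m = 0
    · subst h0
      filter_upwards with ω _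
      rw [hε0]
      constructor <;> [linarith; linarith]
    · by_cases hm : m < M
      · have h1 : 1 ≤ m := by omega
        have h2 : m ≤ M - 1 := by omega
        have hnull : μ ((ε m) ⁻¹' (Set.Ioo (-(ρ / 2)) (ρ / 2))ᶜ) = 0 := by
          rw [← Measure.map_apply (hmeas m) measurableSet_Ioo.compl, hdist m h1 h2,
            Measure.smul_apply, Measure.restrict_apply measurableSet_Ioo.compl]
          simp
        have : ∀ᵐ ω ∂μ, ε m ω ∈ Set.Ioo (-(ρ / 2)) (ρ / 2) := by
          rw [ae_iff]
          convert hnull using 2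
          rfl
        filter_upwards [this] with ω hω _
        exact hω
      · filter_upwards with ω hc
        exact absurd hc hm
  -- pointwise norm of the ambiguity function
  have key1 : (∫ ω, ‖AF (train M Tr Tp (fun k => ε k ω)) 0 f‖ ∂μ)
      = Tp * |_root_.sinc (Real.pi * f * Tp)| * ∫ ω, Gfun M Tr f (fun i => ε (i : ℕ) ω) ∂μ := by
    rw [← MeasureTheory.integral_const_mul]
    refine integral_congr_ae ?_
    filter_upwards [hae] with ω hω
    have hTr : 0 < Tr := by linarith
    have hsep : ∀ m n : ℕ, m < n → n < M →
        (m : ℝ) * Tr + ε m ω + Tp ≤ (n : ℝ) * Tr + ε n ω := by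
      intro m n hmn hnM
      have hm : m < M := lt_trans hmn hnM
      have hbm := hω m hm
      have hbn := hω n hnM
      rw [Set.mem_Ioo] at hbm hbn
      have hcast : (m : ℝ) + 1 ≤ (n : ℝ) := by exact_mod_cast hmn
      have hmul : ((m : ℝ) + 1) * Tr ≤ (n : ℝ) * Tr :=
        mul_le_mul_of_nonneg_right hcast hTr.le
      nlinarith [hbm.1, hbm.2, hbn.1, hbn.2]
    rw [AF_norm M Tr Tp hTp (fun k => ε k ω) f hsep]
    have hsum : ∑ p ∈ Finset.Ico 1 M, ∑ n ∈ Finset.range (M - p),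
          Real.cos (2 * Real.pi * f * ((p : ℝ) * Tr
            + liftF M (fun i => ε (i : ℕ) ω) (n + p) - liftF M (fun i => ε (i : ℕ) ω) n))
        = ∑ p ∈ Finset.Ico 1 M, ∑ n ∈ Finset.range (M - p),
          Real.cos (2 * Real.pi * f * ((p : ℝ) * Tr + ε (n + p) ω - ε n ω)) := by
      refine Finset.sum_congr rfl fun p hp => Finset.sum_congr rfl fun n hn => ?_
      rw [Finset.mem_Ico] at hp
      rw [Finset.mem_range] at hn
      have hnp : n + p < M := by omega
      have hnM : n < M := by omega
      simp only [liftF, dif_pos hnp, dif_pos hnM]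
    unfold Gfun
    rw [hsum]
  -- symmetry of the law under sign flip
  have hVmeas : Measurable (fun ω (i : Fin M) => ε (i : ℕ) ω) :=
    measurable_pi_lambda _ fun i => hmeas _
  have hWmeas : Measurable (fun ω (i : Fin M) => -(ε (i : ℕ) ω)) :=
    measurable_pi_lambda _ fun i => (hmeas _).neg
  have hmarg : ∀ i : Fin M, Measure.map (fun ω => -(ε (i : ℕ) ω)) μ = Measure.map (ε (i : ℕ)) μ := by
    intro i
    by_cases h0 : (i : ℕ) = 0
    · rw [h0]
      have : (fun ω => -(ε 0 ω)) = ε 0 := by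
        funext ω
        rw [hε0]
        ring
      rw [this]
    · have h1 : 1 ≤ (i : ℕ) := by omega
      have h2 : (i : ℕ) ≤ M - 1 := by have := i.isLt; omega
      have hneg : Measure.map (fun ω => -(ε (i : ℕ) ω)) μ
          = Measure.map (fun x : ℝ => -x) (Measure.map (ε (i : ℕ)) μ) := by
        rw [Measure.map_map measurable_neg (hmeas _)]
        rfl
      rw [hneg, hdist _ h1 h2, Measure.map_smul]
      congr 1
      have hpre : (Neg.neg : ℝ → ℝ) ⁻¹' (Set.Ioo (-(ρ / 2)) (ρ / 2)) = Set.Ioo (-(ρ / 2)) (ρ / 2) := by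
        ext x
        simp only [Set.mem_preimage, Set.mem_Ioo]
        constructor <;> (rintro ⟨u1, u2⟩; constructor <;> linarith)
      have hrm := Measure.restrict_map (measurable_neg : Measurable (Neg.neg : ℝ → ℝ))
        (measurableSet_Ioo : MeasurableSet (Set.Ioo (-(ρ / 2)) (ρ / 2))) (μ := volume)
      rw [Measure.map_neg_eq_self (volume : Measure ℝ)] at hrm
      have key : Measure.map (Neg.neg : ℝ → ℝ) (volume.restrict (Set.Ioo (-(ρ / 2)) (ρ / 2)))
          = volume.restrict (Set.Ioo (-(ρ / 2)) (ρ / 2)) := by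
        conv_lhs => rw [← hpre]
        exact hrm.symm
      exact key
  have hmapVW : Measure.map (fun ω (i : Fin M) => ε (i : ℕ) ω) μ
      = Measure.map (fun ω (i : Fin M) => -(ε (i : ℕ) ω)) μ := by
    rw [map_eq_pi μ _ (fun i => hmeas _) hindep,
      map_eq_pi μ (fun i ω => -(ε (i : ℕ) ω)) (fun i => (hmeas _).neg)
        (hindep.comp (fun _ => fun x : ℝ => -x) (fun _ => measurable_neg))]
    congr 1
    funext i
    exact (hmarg i).symm
  have key2 : ∫ ω, Gfun M Tr f (fun i => ε (i : ℕ) ω) ∂μ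
      = ∫ ω, Real.sqrt ((M : ℝ) + 2 * ∑ p ∈ Finset.Ico 1 M, ∑ n ∈ Finset.range (M - p),
          Real.cos (2 * Real.pi * f * ((p : ℝ) * Tr - ε (n + p) ω + ε n ω))) ∂μ := by
    have hsm : AEStronglyMeasurable (Gfun M Tr f)
        (Measure.map (fun ω (i : Fin M) => ε (i : ℕ) ω) μ) :=
      (Gfun_continuous M Tr f).aestronglyMeasurable
    have hsm' : AEStronglyMeasurable (Gfun M Tr f)
        (Measure.map (fun ω (i : Fin M) => -(ε (i : ℕ) ω)) μ) :=
      (Gfun_continuous M Tr f).aestronglyMeasurable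
    calc ∫ ω, Gfun M Tr f (fun i => ε (i : ℕ) ω) ∂μ
        = ∫ v, Gfun M Tr f v ∂(Measure.map (fun ω (i : Fin M) => ε (i : ℕ) ω) μ) :=
          (integral_map hVmeas.aemeasurable hsm).symm
      _ = ∫ v, Gfun M Tr f v ∂(Measure.map (fun ω (i : Fin M) => -(ε (i : ℕ) ω)) μ) := by
          rw [hmapVW]
      _ = ∫ ω, Gfun M Tr f (fun i => -(ε (i : ℕ) ω)) ∂μ :=
          integral_map hWmeas.aemeasurable hsm'
      _ = _ := by
          refine integral_congr_ae (Filter.Eventually.of_forall fun ω => ?_)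
          have hsum : ∑ p ∈ Finset.Ico 1 M, ∑ n ∈ Finset.range (M - p),
                Real.cos (2 * Real.pi * f * ((p : ℝ) * Tr
                  + liftF M (fun i => -(ε (i : ℕ) ω)) (n + p) - liftF M (fun i => -(ε (i : ℕ) ω)) n))
              = ∑ p ∈ Finset.Ico 1 M, ∑ n ∈ Finset.range (M - p),
                Real.cos (2 * Real.pi * f * ((p : ℝ) * Tr - ε (n + p) ω + ε n ω)) := by
            refine Finset.sum_congr rfl fun p hp => Finset.sum_congr rfl fun n hn => ?_
            rw [Finset.mem_Ico] at hp
            rw [Finset.mem_range] at hn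
            have hnp : n + p < M := by omega
            have hnM : n < M := by omega
            simp only [liftF, dif_pos hnp, dif_pos hnM]
            congr 1
            ring
          unfold Gfun
          simp only [hsum]
  rw [key1, key2]
  have hMne : (M : ℝ) ≠ 0 := by positivity
  rw [mul_comm (M : ℝ) Tp, mul_assoc, mul_div_mul_left _ _ hTp.ne', div_mul_eq_mul_div]
end
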